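/- arXiv:2006.00953 — 2 statements merged into one kernel-verified Lean document; each statement's English description precedes it below -/
import Mathlib

section
/- For all real numbers a ≥ b, all p ≥ 1, ρ ≥ p and k > 0, one has (p^p(ρ+1−p)/ρ^p) · (a·|a|_k^{ρ/p−1} − b·|b|_k^{ρ/p−1})^p ≤ (a·|a|_k^{ρ−p} − b·|b|_k^{ρ−p}) · (a−b)^{p−1}, where for t∈ℝ the truncation is |t|_k := min{|t|, k}. -/
noncomputable section

open Set MeasureTheory Real

/-- The truncation `|t|_k = min{|t|, k}`. -/
def trunc (k t : ℝ) : ℝ := min |t| k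

namespace TruncAux

variable {k c : ℝ}

/-- a.e. derivative of `F k c t = t * trunc k t ^ c`. -/
def g (k c t : ℝ) : ℝ := if t ∈ Set.Ico (-k) k then (c + 1) * |t| ^ c else k ^ c

def F (k c t : ℝ) : ℝ := t * trunc k t ^ c

lemma g_nonneg (hk : 0 < k) (hc : 0 ≤ c) (t : ℝ) : 0 ≤ g k c t := by
  unfold g
  split
  · positivity
  · positivity

lemma g_le (hk : 0 < k) (hc : 0 ≤ c) (t : ℝ) : g k c t ≤ (c + 1) * k ^ c := by
  unfold g
  split
  · rename_i h
    have habs : |t| ≤ k := abs_le.2 ⟨h.1, h.2.le⟩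
    exact mul_le_mul_of_nonneg_left (Real.rpow_le_rpow (abs_nonneg t) habs hc) (by linarith)
  · nlinarith [rpow_nonneg hk.le c]

lemma continuous_abs_rpow (hc : 0 ≤ c) : Continuous (fun t : ℝ => |t| ^ c) := by
  apply continuous_iff_continuousAt.2
  intro x
  exact (Real.continuousAt_rpow_const _ _ (Or.inr hc)).comp continuous_abs.continuousAt

lemma measurable_g : Measurable (g k c) := by
  unfold g
  exact Measurable.ite measurableSet_Ico
    (by fun_prop)
    measurable_const

lemma continuous_trunc : Continuous (trunc k) := by
  unfold trunc
  exact continuous_abs.min continuous_const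

lemma continuous_F (hc : 0 ≤ c) : Continuous (F k c) := by
  unfold F
  apply continuous_id.mul
  apply continuous_iff_continuousAt.2
  intro x
  exact (Real.continuousAt_rpow_const _ _ (Or.inr hc)).comp continuous_trunc.continuousAt

lemma hasDerivAt_core (hc : 0 ≤ c) (t : ℝ) :
    HasDerivAt (fun t : ℝ => t * |t| ^ c) ((c + 1) * |t| ^ c) t := by
  rcases eq_or_lt_of_le hc with hc0 | hc0
  · subst hc0
    simp only [Real.rpow_zero, mul_one, zero_add, one_mul]
    exact hasDerivAt_id t
  rcases lt_trichotomy t 0 with ht | ht | ht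
  · -- t < 0
    have h1 : HasDerivAt (fun u : ℝ => u * (-u) ^ c) ((c + 1) * (-t) ^ c) t := by
      have hneg : HasDerivAt (fun u : ℝ => (-u : ℝ)) (-1) t := (hasDerivAt_id t).neg
      have h2 : HasDerivAt (fun u : ℝ => (-u) ^ c) (c * (-t) ^ (c - 1) * (-1)) t :=
        (Real.hasDerivAt_rpow_const (p := c) (Or.inl (by linarith))).comp t hneg
      have h3 := (hasDerivAt_id' t).mul h2
      refine h3.congr_deriv ?_
      have : (-t) ^ (c - 1) * (-t) = (-t) ^ c := by
        rw [← Real.rpow_add_one (by linarith : (-t : ℝ) ≠ 0)]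
        ring_nf
      linear_combination c * this
    have : (fun u : ℝ => u * |u| ^ c) =ᶠ[nhds t] (fun u : ℝ => u * (-u) ^ c) := by
      filter_upwards [Iio_mem_nhds ht] with u hu
      rw [abs_of_neg hu]
    rw [abs_of_neg ht]
    exact h1.congr_of_eventuallyEq this
  · -- t = 0
    subst ht
    rw [hasDerivAt_iff_tendsto_slope]
    have habs : Filter.Tendsto (fun u : ℝ => |u| ^ c) (nhdsWithin 0 {(0:ℝ)}ᶜ) (nhds 0) := by
      have h0 : |(0:ℝ)| ^ c = 0 := by
        simp [Real.zero_rpow hc0.ne']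
      have := (continuous_abs_rpow hc).tendsto 0
      rw [h0] at this
      exact this.mono_left nhdsWithin_le_nhds
    have heq : ∀ u ∈ ({(0:ℝ)}ᶜ : Set ℝ), slope (fun u : ℝ => u * |u| ^ c) 0 u = |u| ^ c := by
      intro u hu
      have hu0 : u ≠ 0 := hu
      rw [slope_def_field]
      field_simp
      simp only [zero_mul, sub_zero]; ring
    simp only [abs_zero, Real.zero_rpow hc0.ne', mul_zero]
    refine habs.congr' ?_
    filter_upwards [self_mem_nhdsWithin] with u hu
    exact (heq u hu).symm
  · -- t > 0
    have h1 : HasDerivAt (fun u : ℝ => u * u ^ c) ((c + 1) * t ^ c) t := by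
      have h2 : HasDerivAt (fun u : ℝ => u ^ c) (c * t ^ (c - 1)) t :=
        Real.hasDerivAt_rpow_const (Or.inl ht.ne')
      have h3 := (hasDerivAt_id' t).mul h2
      refine h3.congr_deriv ?_
      have : t ^ (c - 1) * t = t ^ c := by
        rw [← Real.rpow_add_one ht.ne']
        ring_nf
      linear_combination c * this
    have : (fun u : ℝ => u * |u| ^ c) =ᶠ[nhds t] (fun u : ℝ => u * u ^ c) := by
      filter_upwards [Ioi_mem_nhds ht] with u hu
      rw [abs_of_pos hu]
    rw [abs_of_pos ht]
    exact h1.congr_of_eventuallyEq this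

end TruncAux

namespace TruncAux2
open TruncAux

variable {k c b a : ℝ}

lemma hasDerivWithinAt_F (hk : 0 < k) (hc : 0 ≤ c) (t : ℝ) :
    HasDerivWithinAt (F k c) (g k c t) (Set.Ioi t) t := by
  by_cases h : t ∈ Set.Ico (-k) k
  · have hd := ((hasDerivAt_core hc t).hasDerivWithinAt (s := Set.Ioi t))
    rw [g, if_pos h]
    refine HasDerivWithinAt.congr_of_eventuallyEq hd ?_ ?_
    · filter_upwards [Ioo_mem_nhdsGT_of_mem (⟨le_refl t, h.2⟩ : t ∈ Set.Ico t k)] with u hu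
      have : |u| ≤ k := abs_le.2 ⟨by linarith [h.1, hu.1], hu.2.le⟩
      simp only [F, trunc, min_eq_left this]
    · simp only [F, trunc, min_eq_left (abs_le.2 ⟨h.1, h.2.le⟩)]
  · rw [g, if_neg h]
    have hlin : HasDerivWithinAt (fun u : ℝ => u * k ^ c) (k ^ c) (Set.Ioi t) t := by
      simpa using ((hasDerivAt_id t).mul_const (k ^ c)).hasDerivWithinAt (s := Set.Ioi t)
    rcases le_or_gt (-k) t with h1 | h1
    · have hkt : k ≤ t := by
        by_contra hlt; push_neg at hlt; exact h ⟨h1, hlt⟩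
      refine hlin.congr_of_eventuallyEq ?_ ?_
      · filter_upwards [self_mem_nhdsWithin] with u hu
        have : k ≤ |u| := le_trans hkt (le_trans (le_of_lt hu) (le_abs_self u))
        simp only [F, trunc, min_eq_right this]
      · simp only [F, trunc, min_eq_right (le_trans hkt (le_abs_self t))]
    · refine hlin.congr_of_eventuallyEq ?_ ?_
      · have hmem : Set.Iio (-k) ∈ nhdsWithin t (Set.Ioi t) :=
          mem_nhdsWithin_of_mem_nhds (Iio_mem_nhds h1)
        filter_upwards [hmem] with u hu
        have hu' : u < -k := hu
        have : k ≤ |u| := by rw [abs_of_neg (by linarith : u < 0)]; linarith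
        simp only [F, trunc, min_eq_right this]
      · have : k ≤ |t| := by rw [abs_of_neg (by linarith : t < 0)]; linarith
        simp only [F, trunc, min_eq_right this]

lemma integrableOn_of_bdd {f : ℝ → ℝ} (hm : Measurable f) (M : ℝ) (hbd : ∀ t, ‖f t‖ ≤ M) :
    IntegrableOn f (Set.Ioc b a) volume := by
  refine Integrable.mono' (g := fun _ => M) ?_ hm.aestronglyMeasurable ?_
  · exact integrableOn_const measure_Ioc_lt_top.ne
  · exact Filter.Eventually.of_forall hbd

lemma intervalIntegrable_g (hk : 0 < k) (hc : 0 ≤ c) (hab : b ≤ a) :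
    IntervalIntegrable (g k c) volume b a := by
  rw [intervalIntegrable_iff_integrableOn_Ioc_of_le hab]
  refine integrableOn_of_bdd measurable_g ((c + 1) * k ^ c) fun t => ?_
  rw [Real.norm_eq_abs, abs_of_nonneg (g_nonneg hk hc t)]
  exact g_le hk hc t

lemma ftc (hk : 0 < k) (hc : 0 ≤ c) (hab : b ≤ a) :
    ∫ t in b..a, g k c t = F k c a - F k c b :=
  intervalIntegral.integral_eq_sub_of_hasDeriv_right_of_le hab
    ((continuous_F hc).continuousOn) (fun x _ => hasDerivWithinAt_F hk hc x)
    (intervalIntegrable_g hk hc hab)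

lemma jensen {p : ℝ} (hp : 1 ≤ p) (hab : b < a) (f : ℝ → ℝ) (hm : Measurable f)
    (hnn : ∀ t, 0 ≤ f t) (M : ℝ) (hbd : ∀ t, f t ≤ M) :
    (∫ t in Set.Ioc b a, f t) ^ p ≤ (a - b) ^ (p - 1) * ∫ t in Set.Ioc b a, f t ^ p := by
  set μ : Measure ℝ := volume.restrict (Set.Ioc b a) with hμ
  have hd : (0 : ℝ) < a - b := by linarith
  haveI hfin : IsFiniteMeasure μ := ⟨by
    rw [hμ, Measure.restrict_apply_univ]; exact measure_Ioc_lt_top⟩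
  have huniv : μ Set.univ = ENNReal.ofReal (a - b) := by
    rw [hμ, Measure.restrict_apply_univ, Real.volume_Ioc]
  haveI hne : NeZero μ := ⟨by
    intro h0
    rw [h0] at huniv
    simp only [Measure.coe_zero, Pi.zero_apply] at huniv
    exact (ENNReal.ofReal_pos.2 hd).ne' huniv.symm⟩
  have hcontp : Continuous (fun x : ℝ => x ^ p) := by
    apply continuous_iff_continuousAt.2
    intro x
    exact Real.continuousAt_rpow_const x p (Or.inr (by linarith))
  have hfi : Integrable f μ := by
    refine Integrable.mono' (g := fun _ => M) (integrable_const M) hm.aestronglyMeasurable ?_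
    refine Filter.Eventually.of_forall fun t => ?_
    rw [Real.norm_eq_abs, abs_of_nonneg (hnn t)]
    exact hbd t
  have hgi : Integrable ((fun x : ℝ => x ^ p) ∘ f) μ := by
    have hM : 0 ≤ M := le_trans (hnn 0) (hbd 0)
    refine Integrable.mono' (g := fun _ => M ^ p)
      (integrable_const _) ((hcontp.measurable.comp hm).aestronglyMeasurable) ?_
    refine Filter.Eventually.of_forall fun t => ?_
    simp only [Function.comp_apply, Real.norm_eq_abs,
      abs_of_nonneg (Real.rpow_nonneg (hnn t) p)]
    exact Real.rpow_le_rpow (hnn t) (hbd t) (by linarith)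
  have hj := (convexOn_rpow hp).map_average_le
    (fun x hx => (Real.continuousAt_rpow_const x p (Or.inr (by linarith))).continuousWithinAt)
    isClosed_Ici (Filter.Eventually.of_forall fun t => hnn t) hfi hgi
  rw [average_eq, average_eq, measureReal_def, huniv, ENNReal.toReal_ofReal hd.le] at hj
  simp only [smul_eq_mul] at hj
  -- hj : ((a-b)⁻¹ * ∫ f)^p ≤ (a-b)⁻¹ * ∫ f^p
  set I := ∫ t in Set.Ioc b a, f t with hI
  set J := ∫ t in Set.Ioc b a, f t ^ p with hJ
  have hInn : 0 ≤ I := setIntegral_nonneg measurableSet_Ioc fun t _ => hnn t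
  have hlhs : ((a - b)⁻¹ * I) ^ p = ((a - b) ^ p)⁻¹ * I ^ p := by
    rw [Real.mul_rpow (by positivity) hInn, Real.inv_rpow hd.le]
  rw [hlhs] at hj
  have hpow : (0:ℝ) < (a - b) ^ p := Real.rpow_pos_of_pos hd p
  have h2 : I ^ p ≤ (a - b) ^ p * ((a - b)⁻¹ * J) := by
    calc I ^ p = (a - b) ^ p * (((a - b) ^ p)⁻¹ * I ^ p) := by
          field_simp
      _ ≤ (a - b) ^ p * ((a - b)⁻¹ * J) := by
          exact mul_le_mul_of_nonneg_left hj hpow.le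
  calc I ^ p ≤ (a - b) ^ p * ((a - b)⁻¹ * J) := h2
    _ = (a - b) ^ (p - 1) * J := by
        rw [Real.rpow_sub hd, Real.rpow_one]
        field_simp

end TruncAux2

namespace TruncAux3
open TruncAux TruncAux2

lemma pointwise {p ρ k : ℝ} (hk : 0 < k) (hp : 1 ≤ p) (hρ : p ≤ ρ) (t : ℝ) :
    p ^ p * (ρ + 1 - p) / ρ ^ p * (g k (ρ / p - 1) t) ^ p ≤ g k (ρ - p) t := by
  have hp0 : 0 < p := lt_of_lt_of_le one_pos hp
  have hρ0 : 0 < ρ := lt_of_lt_of_le hp0 hρ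
  have hα : 0 ≤ ρ / p - 1 := by
    rw [le_sub_iff_add_le, zero_add, le_div_iff₀ hp0, one_mul]; exact hρ
  have hpp : (0:ℝ) < p ^ p := Real.rpow_pos_of_pos hp0 p
  have hρp : (0:ℝ) < ρ ^ p := Real.rpow_pos_of_pos hρ0 p
  have hmul : (ρ / p - 1) * p = ρ - p := by field_simp
  have hdivp : ((ρ / p : ℝ)) ^ p = ρ ^ p / p ^ p := Real.div_rpow hρ0.le hp0.le p
  unfold g
  by_cases h : t ∈ Set.Ico (-k) k
  · rw [if_pos h, if_pos h]
    rw [Real.mul_rpow (by linarith) (Real.rpow_nonneg (abs_nonneg t) _),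
      ← Real.rpow_mul (abs_nonneg t), hmul]
    have hsum : (ρ / p - 1 + 1 : ℝ) = ρ / p := by ring
    rw [hsum, hdivp]
    have : p ^ p * (ρ + 1 - p) / ρ ^ p * (ρ ^ p / p ^ p * |t| ^ (ρ - p))
        = (ρ - p + 1) * |t| ^ (ρ - p) := by
      field_simp
      ring
    rw [this]
  · rw [if_neg h, if_neg h]
    rw [← Real.rpow_mul hk.le, hmul]
    have hber := one_add_mul_self_le_rpow_one_add (s := ρ / p - 1) (by linarith) hp
    have h1 : 1 + p * (ρ / p - 1) = ρ + 1 - p := by field_simp; ring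
    have h2 : (1 + (ρ / p - 1) : ℝ) = ρ / p := by ring
    rw [h1, h2, hdivp] at hber
    have hC : p ^ p * (ρ + 1 - p) / ρ ^ p ≤ 1 := by
      rw [div_le_one hρp]
      calc p ^ p * (ρ + 1 - p) ≤ p ^ p * (ρ ^ p / p ^ p) :=
            mul_le_mul_of_nonneg_left hber hpp.le
        _ = ρ ^ p := by field_simp
    calc p ^ p * (ρ + 1 - p) / ρ ^ p * k ^ (ρ - p) ≤ 1 * k ^ (ρ - p) :=
          mul_le_mul_of_nonneg_right hC (Real.rpow_nonneg hk.le _)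
      _ = k ^ (ρ - p) := one_mul _

end TruncAux3


open TruncAux TruncAux2 TruncAux3

/-- for all `a ≥ b`, `p ≥ 1`, `ρ ≥ p`, `k > 0`,
`(p^p(ρ+1−p)/ρ^p)(a|a|_k^{ρ/p−1} − b|b|_k^{ρ/p−1})^p
  ≤ (a|a|_k^{ρ−p} − b|b|_k^{ρ−p})(a−b)^{p−1}`. -/
theorem elementary_truncation_inequality
    (a b p ρ k : ℝ) (hab : b ≤ a) (hp : 1 ≤ p) (hρ : p ≤ ρ) (hk : 0 < k) :
    p ^ p * (ρ + 1 - p) / ρ ^ p *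
        (a * trunc k a ^ (ρ / p - 1) - b * trunc k b ^ (ρ / p - 1)) ^ p ≤
      (a * trunc k a ^ (ρ - p) - b * trunc k b ^ (ρ - p)) * (a - b) ^ (p - 1) := by
  have hp0 : 0 < p := lt_of_lt_of_le one_pos hp
  have hρ0 : 0 < ρ := lt_of_lt_of_le hp0 hρ
  rcases eq_or_lt_of_le hab with heq | hlt
  · subst heq
    simp [sub_self, Real.zero_rpow hp0.ne']
  · have hα : 0 ≤ ρ / p - 1 := by
      rw [le_sub_iff_add_le, zero_add, le_div_iff₀ hp0, one_mul]; exact hρ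
    have hρp : 0 ≤ ρ - p := by linarith
    have hC : 0 ≤ p ^ p * (ρ + 1 - p) / ρ ^ p :=
      div_nonneg (mul_nonneg (Real.rpow_pos_of_pos hp0 p).le (by linarith))
        (Real.rpow_pos_of_pos hρ0 p).le
    have e1 : a * trunc k a ^ (ρ / p - 1) - b * trunc k b ^ (ρ / p - 1)
        = ∫ t in Set.Ioc b a, g k (ρ / p - 1) t := by
      rw [← intervalIntegral.integral_of_le hab, ftc hk hα hab]; rfl
    have e2 : a * trunc k a ^ (ρ - p) - b * trunc k b ^ (ρ - p)
        = ∫ t in Set.Ioc b a, g k (ρ - p) t := by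
      rw [← intervalIntegral.integral_of_le hab, ftc hk hρp hab]; rfl
    rw [e1, e2]
    set C := p ^ p * (ρ + 1 - p) / ρ ^ p with hCdef
    have hcontp : Continuous (fun x : ℝ => x ^ p) := by
      apply continuous_iff_continuousAt.2
      intro x
      exact Real.continuousAt_rpow_const x p (Or.inr (by linarith))
    have hmono : ∫ t in Set.Ioc b a, C * (g k (ρ / p - 1) t) ^ p
        ≤ ∫ t in Set.Ioc b a, g k (ρ - p) t := by
      refine setIntegral_mono_on ?_ ?_ measurableSet_Ioc
        (fun t _ => pointwise hk hp hρ t)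
      · refine integrableOn_of_bdd ((hcontp.measurable.comp measurable_g).const_mul C)
          (C * ((ρ / p - 1 + 1) * k ^ (ρ / p - 1)) ^ p) fun t => ?_
        have h1 : 0 ≤ g k (ρ / p - 1) t := g_nonneg hk hα t
        rw [Real.norm_eq_abs, abs_of_nonneg (mul_nonneg hC (Real.rpow_nonneg h1 p))]
        exact mul_le_mul_of_nonneg_left
          (Real.rpow_le_rpow h1 (g_le hk hα t) (by linarith)) hC
      · refine integrableOn_of_bdd measurable_g ((ρ - p + 1) * k ^ (ρ - p)) fun t => ?_
        rw [Real.norm_eq_abs, abs_of_nonneg (g_nonneg hk hρp t)]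
        exact g_le hk hρp t
    calc C * (∫ t in Set.Ioc b a, g k (ρ / p - 1) t) ^ p
        ≤ C * ((a - b) ^ (p - 1) * ∫ t in Set.Ioc b a, (g k (ρ / p - 1) t) ^ p) := by
          refine mul_le_mul_of_nonneg_left ?_ hC
          exact jensen hp hlt _ measurable_g (g_nonneg hk hα)
            ((ρ / p - 1 + 1) * k ^ (ρ / p - 1)) (g_le hk hα)
      _ = (a - b) ^ (p - 1) * ∫ t in Set.Ioc b a, C * (g k (ρ / p - 1) t) ^ p := by
          rw [integral_const_mul]
          ring
      _ ≤ (a - b) ^ (p - 1) * ∫ t in Set.Ioc b a, g k (ρ - p) t := by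
          exact mul_le_mul_of_nonneg_left hmono
            (Real.rpow_nonneg (by linarith) _)
      _ = (∫ t in Set.Ioc b a, g k (ρ - p) t) * (a - b) ^ (p - 1) := mul_comm _ _

end
end

section
/- Fix η>1 and define f(t)=t^{η−1}log(1+t) for t≥0 (and f(t)=0 for t<0), with primitive F(t)=∫₀ᵗ f(s)ds. Then (a) lim_{t→∞} F(t)/t^η = ∞, so f is superlinear at infinity in the sense of (3.2); but (b) f does not satisfy the Ambrosetti–Rabinowitz condition: there exist no r>0 and θ>η such that 0 < θF(t) ≤ t f(t) for all t ≥ r. -/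
open MeasureTheory Set Filter Topology

noncomputable section

/-- `f(t) = t^{η−1} log(1+t)` for `t ≥ 0`, and `0` for `t < 0`. -/
def f15 (η t : ℝ) : ℝ := if 0 ≤ t then t ^ (η - 1) * Real.log (1 + t) else 0

/-- `F(t) = ∫₀ᵗ f(τ) dτ`. -/
def F15 (η t : ℝ) : ℝ := ∫ τ in (0:ℝ)..t, f15 η τ

namespace Aux15

variable {η : ℝ}

lemma f15_of_nonneg {t : ℝ} (ht : 0 ≤ t) :
    f15 η t = t ^ (η - 1) * Real.log (1 + t) := if_pos ht

lemma f15_cont (hη : 1 < η) : Continuous (f15 η) := by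
  have h : f15 η = fun t => (max t 0) ^ (η - 1) * Real.log (1 + max t 0) := by
    funext t
    rcases le_or_gt 0 t with ht | ht
    · rw [f15_of_nonneg ht, max_eq_left ht]
    · show (if 0 ≤ t then t ^ (η - 1) * Real.log (1 + t) else 0) = _
      rw [if_neg (not_le.mpr ht), max_eq_right ht.le,
        Real.zero_rpow (by linarith), zero_mul]
  rw [h]
  refine Continuous.mul ?_ ?_
  · exact (continuous_id.max continuous_const).rpow_const fun x => Or.inr (by linarith)
  · refine Real.continuousOn_log.comp_continuous
      (continuous_const.add (continuous_id.max continuous_const)) fun x => ?_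
    have : (0:ℝ) ≤ max x 0 := le_max_right _ _
    simp only [Set.mem_compl_iff, Set.mem_singleton_iff]
    intro h0
    nlinarith [h0]

lemma f15_nonneg (hη : 1 < η) (t : ℝ) : 0 ≤ f15 η t := by
  rcases le_or_gt 0 t with ht | ht
  · rw [f15_of_nonneg ht]
    exact mul_nonneg (Real.rpow_nonneg ht _) (Real.log_nonneg (by linarith))
  · show 0 ≤ (if 0 ≤ t then t ^ (η - 1) * Real.log (1 + t) else 0)
    rw [if_neg (not_le.mpr ht)]

lemma f15_mono (hη : 1 < η) {s t : ℝ} (hs : 0 ≤ s) (hst : s ≤ t) :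
    f15 η s ≤ f15 η t := by
  have ht : 0 ≤ t := hs.trans hst
  rw [f15_of_nonneg hs, f15_of_nonneg ht]
  have h1 : s ^ (η - 1) ≤ t ^ (η - 1) := Real.rpow_le_rpow hs hst (by linarith)
  have h2 : Real.log (1 + s) ≤ Real.log (1 + t) :=
    (Real.log_le_log_iff (by linarith) (by linarith)).mpr (by linarith)
  exact mul_le_mul h1 h2 (Real.log_nonneg (by linarith)) (Real.rpow_nonneg ht _)

lemma f15_intble (hη : 1 < η) (a b : ℝ) :
    IntervalIntegrable (f15 η) volume a b :=
  (f15_cont hη).intervalIntegrable a b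

lemma F15_hasDerivAt (hη : 1 < η) (t : ℝ) :
    HasDerivAt (F15 η) (f15 η t) t :=
  ((f15_cont hη).integral_hasStrictDerivAt 0 t).hasDerivAt

lemma F15_cont (hη : 1 < η) : Continuous (F15 η) :=
  continuous_iff_continuousAt.mpr fun t => (F15_hasDerivAt hη t).continuousAt

lemma F15_upper (hη : 1 < η) {t : ℝ} (ht : 0 ≤ t) : F15 η t ≤ t * f15 η t := by
  have h : F15 η t ≤ ∫ _ in (0:ℝ)..t, f15 η t := by
    refine intervalIntegral.integral_mono_on ht (f15_intble hη 0 t)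
      (intervalIntegrable_const) fun x hx => f15_mono hη hx.1 hx.2
  simpa using h

lemma F15_lower (hη : 1 < η) {t : ℝ} (ht : 0 ≤ t) :
    (t / 2) * f15 η (t / 2) ≤ F15 η t := by
  have h2 : (0:ℝ) ≤ t / 2 := by linarith
  have hsplit : F15 η t =
      (∫ s in (0:ℝ)..t / 2, f15 η s) + ∫ s in (t / 2)..t, f15 η s :=
    (intervalIntegral.integral_add_adjacent_intervals
      (f15_intble hη 0 (t / 2)) (f15_intble hη (t / 2) t)).symm
  have h1 : 0 ≤ ∫ s in (0:ℝ)..t / 2, f15 η s :=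
    intervalIntegral.integral_nonneg h2 fun x _ => f15_nonneg hη x
  have h3 : (t - t / 2) * f15 η (t / 2) ≤ ∫ s in (t / 2)..t, f15 η s := by
    have h := intervalIntegral.integral_mono_on (by linarith : t / 2 ≤ t)
      (intervalIntegrable_const (c := f15 η (t / 2)))
      (f15_intble hη (t / 2) t) fun x hx => f15_mono hη h2 hx.1
    simpa [smul_eq_mul] using h
  have : t - t / 2 = t / 2 := by ring
  rw [this] at h3
  linarith

end Aux15

open Aux15

/-- `f(t)=t^{η−1}log(1+t)` is superlinear at infinity in the sense of (3.2),
i.e. `F(t)/t^η → ∞`, but does not satisfy the Ambrosetti–Rabinowitz condition with any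
exponent `θ > η`. -/
theorem log_example_superlinear_but_not_AR (η : ℝ) (hη : 1 < η) :
    Tendsto (fun t : ℝ => F15 η t / t ^ η) atTop atTop ∧
    ¬ ∃ r > (0:ℝ), ∃ θ : ℝ, η < θ ∧ ∀ t : ℝ, r ≤ t →
        0 < θ * F15 η t ∧ θ * F15 η t ≤ t * f15 η t := by
  constructor
  · -- superlinearity
    have key : ∀ t : ℝ, 1 ≤ t →
        Real.log (1 + t / 2) / 2 ^ η ≤ F15 η t / t ^ η := by
      intro t ht
      have ht0 : (0:ℝ) < t := by linarith
      have h2 : (0:ℝ) < t / 2 := by linarith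
      have hlow : (t / 2) ^ η * Real.log (1 + t / 2) ≤ F15 η t := by
        have h := F15_lower hη ht0.le
        rw [f15_of_nonneg h2.le] at h
        have : (t / 2) * ((t / 2) ^ (η - 1) * Real.log (1 + t / 2)) =
            (t / 2) ^ η * Real.log (1 + t / 2) := by
          rw [show η = (η - 1) + 1 by ring, Real.rpow_add_one h2.ne']
          ring
        linarith [this ▸ h]
      have hpow : (t / 2) ^ η = t ^ η / 2 ^ η :=
        Real.div_rpow ht0.le (by norm_num) η
      have htpos : (0:ℝ) < t ^ η := Real.rpow_pos_of_pos ht0 η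
      have h2pos : (0:ℝ) < (2:ℝ) ^ η := Real.rpow_pos_of_pos (by norm_num) η
      rw [hpow] at hlow
      rw [div_le_div_iff₀ h2pos htpos]
      calc Real.log (1 + t / 2) * t ^ η
          = (t ^ η / 2 ^ η * Real.log (1 + t / 2)) * 2 ^ η := by
            field_simp
          _ ≤ F15 η t * 2 ^ η := by
            exact mul_le_mul_of_nonneg_right hlow h2pos.le
    have hg : Tendsto (fun t : ℝ => Real.log (1 + t / 2) / 2 ^ η) atTop atTop := by
      refine Tendsto.atTop_div_const (Real.rpow_pos_of_pos (by norm_num) η) ?_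
      refine Real.tendsto_log_atTop.comp ?_
      refine tendsto_atTop_add_const_left _ 1 ?_
      exact Tendsto.atTop_div_const (by norm_num) tendsto_id
    exact tendsto_atTop_mono' atTop
      (eventually_atTop.mpr ⟨1, fun t ht => key t ht⟩) hg
  · -- not AR
    rintro ⟨r, hr, θ, hθ, hAR⟩
    have hη0 : (0:ℝ) < η := by linarith
    have hθ0 : (0:ℝ) < θ := by linarith
    have hFr : 0 < F15 η r := by
      have h := (hAR r le_rfl).1
      nlinarith
    -- g(t) = F(t)/t^θ is monotone on [r, ∞)
    set g : ℝ → ℝ := fun t => F15 η t / t ^ θ with hg_def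
    have hgderiv : ∀ x : ℝ, r < x →
        HasDerivAt g ((f15 η x * x ^ θ - F15 η x * (θ * x ^ (θ - 1))) /
          (x ^ θ) ^ 2) x := by
      intro x hx
      have hx0 : (0:ℝ) < x := lt_trans hr hx
      have h1 := F15_hasDerivAt hη x
      have h2 : HasDerivAt (fun t : ℝ => t ^ θ) (θ * x ^ (θ - 1)) x :=
        Real.hasDerivAt_rpow_const (Or.inl hx0.ne')
      exact h1.div h2 (Real.rpow_pos_of_pos hx0 θ).ne'
    have hmono : MonotoneOn g (Ici r) := by
      refine monotoneOn_of_deriv_nonneg (convex_Ici r) ?_ ?_ ?_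
      · refine ContinuousOn.div (F15_cont hη).continuousOn ?_ ?_
        · intro x hx
          exact (Real.continuousAt_rpow_const x θ
            (Or.inl (by exact (lt_of_lt_of_le hr hx).ne'))).continuousWithinAt
        · intro x hx
          exact (Real.rpow_pos_of_pos (lt_of_lt_of_le hr hx) θ).ne'
      · rw [interior_Ici]
        intro x hx
        exact ((hgderiv x hx).differentiableAt).differentiableWithinAt
      · rw [interior_Ici]
        intro x hx
        rw [(hgderiv x hx).deriv]
        have hx0 : (0:ℝ) < x := lt_trans hr hx
        have hAR' := (hAR x hx.le).2
        have hpow : x * x ^ (θ - 1) = x ^ θ := by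
          rw [show θ = (θ - 1) + 1 by ring, Real.rpow_add_one hx0.ne']
          ring
        have hnum : 0 ≤ f15 η x * x ^ θ - F15 η x * (θ * x ^ (θ - 1)) := by
          have hp : (0:ℝ) ≤ x ^ (θ - 1) := (Real.rpow_pos_of_pos hx0 _).le
          have h2 := mul_le_mul_of_nonneg_right hAR' hp
          have h3 : x * f15 η x * x ^ (θ - 1) = f15 η x * x ^ θ := by
            rw [← hpow]; ring
          rw [h3] at h2
          nlinarith [h2]
        positivity
    -- hence F(t) ≥ c t^θ for t ≥ r, where c = F(r)/r^θ > 0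
    set c : ℝ := F15 η r / r ^ θ with hc_def
    have hc : 0 < c := div_pos hFr (Real.rpow_pos_of_pos hr θ)
    have hFlow : ∀ t : ℝ, r ≤ t → c * t ^ θ ≤ F15 η t := by
      intro t ht
      have ht0 : (0:ℝ) < t := lt_of_lt_of_le hr ht
      have h := hmono (self_mem_Ici) (mem_Ici.mpr ht) ht
      have htp : (0:ℝ) < t ^ θ := Real.rpow_pos_of_pos ht0 θ
      rw [hg_def] at h
      simp only at h
      calc c * t ^ θ ≤ (F15 η t / t ^ θ) * t ^ θ :=
            mul_le_mul_of_nonneg_right h htp.le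
        _ = F15 η t := by field_simp
    -- and F(t) ≤ t^η log(1+t)
    have hFup : ∀ t : ℝ, r ≤ t → F15 η t ≤ t ^ η * Real.log (1 + t) := by
      intro t ht
      have ht0 : (0:ℝ) < t := lt_of_lt_of_le hr ht
      have h := F15_upper hη ht0.le
      rw [f15_of_nonneg ht0.le] at h
      have : t * (t ^ (η - 1) * Real.log (1 + t)) = t ^ η * Real.log (1 + t) := by
        rw [show η = (η - 1) + 1 by ring, Real.rpow_add_one ht0.ne']
        ring
      linarith [this ▸ h]
    set δ : ℝ := θ - η with hδ_def
    have hδ : 0 < δ := by simp [hδ_def]; linarith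
    -- c t^δ ≤ log(1+t) for t ≥ r
    have hkey : ∀ t : ℝ, r ≤ t → c * t ^ δ ≤ Real.log (1 + t) := by
      intro t ht
      have ht0 : (0:ℝ) < t := lt_of_lt_of_le hr ht
      have h1 := (hFlow t ht).trans (hFup t ht)
      have hsplit : t ^ θ = t ^ η * t ^ δ := by
        rw [← Real.rpow_add ht0, hδ_def]; ring_nf
      rw [hsplit] at h1
      have htη : (0:ℝ) < t ^ η := Real.rpow_pos_of_pos ht0 η
      have : c * (t ^ η * t ^ δ) = (c * t ^ δ) * t ^ η := by ring
      rw [this] at h1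
      have h2 : Real.log (1 + t) * t ^ η = t ^ η * Real.log (1 + t) := by ring
      exact le_of_mul_le_mul_right (by linarith) htη
    -- log grows slower than t^δ: contradiction
    have hlo := isLittleO_log_rpow_atTop hδ
    have heps : ∀ᶠ x : ℝ in atTop, ‖Real.log x‖ ≤ c / 4 * ‖x ^ δ‖ :=
      hlo.def (by positivity)
    obtain ⟨N, hN⟩ := eventually_atTop.mp heps
    set t : ℝ := max N (max r 2) with ht_def
    have htN : N ≤ t := le_max_left _ _
    have htr : r ≤ t := le_trans (le_max_left _ _) (le_max_right _ _)
    have ht2 : (2:ℝ) ≤ t := le_trans (le_max_right _ _) (le_max_right _ _)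
    have ht0 : (0:ℝ) < t := by linarith
    have htδ : (0:ℝ) < t ^ δ := Real.rpow_pos_of_pos ht0 δ
    have hlog2 : Real.log (1 + t) ≤ 2 * Real.log t := by
      have h1t : 1 + t ≤ t * t := by nlinarith
      have := (Real.log_le_log_iff (by linarith) (by nlinarith)).mpr h1t
      rw [Real.log_mul ht0.ne' ht0.ne'] at this
      linarith
    have hlogt : Real.log t ≤ c / 4 * t ^ δ := by
      have h := hN t htN
      rw [Real.norm_eq_abs, Real.norm_eq_abs, abs_of_pos htδ] at h
      exact (le_abs_self _).trans h
    have h1 := hkey t htr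
    nlinarith [h1, hlog2, hlogt, hc, htδ]

end
end
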